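/- Let R = ℝ[t]/(t²) (the dual numbers over ℝ, with ε the class of t satisfying ε² = 0). The evolution algebra A over R with basis (x_i)_{i≥1} and relations x_i·x_i = ε•x_i + x_{i+1}, x_i·x_j = 0 for i ≠ j, is not nilpotent: the plenary powers of x_1 satisfy x_1^{[n]} = ε•x_n + x_{n+1} ≠ 0 for all n ≥ 1, and for every n ≥ 2 there exist elements of A whose left-normed product of length n is nonzero. (Example 3.4, part 2) -/

import Mathlib

/-!
Let `R = ℝ[t]/(t²)` be the ring of dual numbers over `ℝ` (`DualNumber ℝ` in
Mathlib), with `ε = DualNumber.eps` the class of `t`, so `ε ≠ 0` and `ε² = 0`.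
The evolution algebra `A` over `R` has basis `(x_i)_{i ≥ 1}` indexed by `ℕ+`
(underlying module `ℕ+ →₀ DualNumber ℝ`, `x_i = Finsupp.single i 1`) and
relations `x_i · x_i = ε•x_i + x_{i+1}`, `x_i · x_j = 0` for `i ≠ j`;
concretely `(a · b) = ∑_i a(i) * b(i) • (ε • x_i + x_{i+1})`.
-/
noncomputable def evolMul {R : Type*} [CommRing R] {ι : Type*}
    (Csq : ι → ι →₀ R) (a b : ι →₀ R) : ι →₀ R :=
  a.sum fun i ai => (ai * b i) • Csq i

/-- The squares of the basis elements: `x_i · x_i = ε • x_i + x_{i+1}`. -/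
noncomputable def sqD : ℕ+ → (ℕ+ →₀ DualNumber ℝ) := fun i =>
  (DualNumber.eps : DualNumber ℝ) • Finsupp.single i (1 : DualNumber ℝ)
    + Finsupp.single (i + 1) 1

/-- Plenary powers: `plenary mul a n = a^{[n]}` for `n ≥ 1`, defined by
`a^{[1]} = a · a` and `a^{[n+1]} = a^{[n]} · a^{[n]}`. -/
def plenary {A : Type*} (mul : A → A → A) (a : A) : ℕ → A
  | 0 => a
  | n + 1 => mul (plenary mul a n) (plenary mul a n)

/-- Left-normed products: `lnp mul f m = ((f 0 · f 1) · f 2) ⋯ · f m`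
is the left-normed product of the `m + 1` elements `f 0, …, f m`. -/
def lnp {A : Type*} (mul : A → A → A) (f : ℕ → A) : ℕ → A
  | 0 => f 0
  | m + 1 => mul (lnp mul f m) (f (m + 1))

lemma mul_key (i j : ℕ+) (hij : i ≠ j) (b : ℕ+ →₀ DualNumber ℝ)
    (hbi : DualNumber.eps * b i = 0) (hbj : b j = 1) :
    evolMul sqD ((DualNumber.eps : DualNumber ℝ) • Finsupp.single i 1
      + Finsupp.single j 1) b = sqD j := by
  rw [evolMul, Finsupp.smul_single']
  rw [Finsupp.sum_add_index' (fun k => by simp) (fun k b₁ b₂ => by rw [add_mul, add_smul])]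
  rw [Finsupp.sum_single_index (by simp), Finsupp.sum_single_index (by simp)]
  rw [mul_one, hbi, hbj, one_mul, zero_smul, zero_add, one_smul]

lemma sq_key (i : ℕ+) :
    evolMul sqD ((DualNumber.eps : DualNumber ℝ) • Finsupp.single i 1
        + Finsupp.single (i+1) 1)
      ((DualNumber.eps : DualNumber ℝ) • Finsupp.single i 1
        + Finsupp.single (i+1) 1)
    = (DualNumber.eps : DualNumber ℝ) • Finsupp.single (i+1) 1
        + Finsupp.single (i+1+1) 1 := by
  have hne : i ≠ i + 1 := by
    intro h; have := congrArg (PNat.val) h; simp at this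
  have hne' : i + 1 ≠ i := fun h => hne h.symm
  rw [mul_key i (i+1) hne]
  · rfl
  · simp [Finsupp.single_apply, hne', DualNumber.eps_mul_eps]
  · simp [Finsupp.single_apply, hne]

lemma base_key :
    evolMul sqD (Finsupp.single 1 1) (Finsupp.single (1:ℕ+) (1 : DualNumber ℝ))
      = (DualNumber.eps : DualNumber ℝ) • Finsupp.single 1 1
        + Finsupp.single 2 1 := by
  rw [evolMul, Finsupp.sum_single_index (by simp), Finsupp.single_eq_same,
    mul_one, one_smul]
  rfl

lemma nz (i j : ℕ+) (hij : i ≠ j) :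
    ((DualNumber.eps : DualNumber ℝ) • Finsupp.single i 1
      + Finsupp.single j 1 : ℕ+ →₀ DualNumber ℝ) ≠ 0 := by
  intro h
  have := congrArg (fun g : ℕ+ →₀ DualNumber ℝ => g j) h
  simp [Finsupp.single_apply, hij] at this

lemma plen (m : ℕ) :
    plenary (evolMul sqD) (Finsupp.single 1 1) (m+1)
      = (DualNumber.eps : DualNumber ℝ) • Finsupp.single (m+1 : ℕ).toPNat' 1
        + Finsupp.single ((m+1 : ℕ).toPNat' + 1) 1 := by
  induction m with
  | zero => simpa [plenary, show Nat.toPNat' 1 = (1:ℕ+) from rfl, show (1:ℕ+) + 1 = 2 from rfl] using base_key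
  | succ m ih =>
      have h2 : ((m+2 : ℕ).toPNat' : ℕ+) = (m+1 : ℕ).toPNat' + 1 := by
        apply PNat.coe_injective; simp [Nat.toPNat']
      rw [show plenary (evolMul sqD) (Finsupp.single 1 1) (m+2)
        = evolMul sqD (plenary (evolMul sqD) (Finsupp.single 1 1) (m+1))
            (plenary (evolMul sqD) (Finsupp.single 1 1) (m+1)) from rfl, ih,
        sq_key, h2]

noncomputable def fwit : ℕ → (ℕ+ →₀ DualNumber ℝ) := fun k =>
  Finsupp.single k.toPNat' 1

lemma lnp_key (m : ℕ) :
    lnp (evolMul sqD) fwit (m+1)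
      = (DualNumber.eps : DualNumber ℝ) • Finsupp.single (m+1 : ℕ).toPNat' 1
        + Finsupp.single ((m+1 : ℕ).toPNat' + 1) 1 := by
  induction m with
  | zero => simpa [lnp, fwit, show Nat.toPNat' 1 = (1:ℕ+) from rfl, show (1:ℕ+) + 1 = 2 from rfl] using base_key
  | succ m ih =>
      have h2 : ((m+2 : ℕ).toPNat' : ℕ+) = (m+1 : ℕ).toPNat' + 1 := by
        apply PNat.coe_injective; simp [Nat.toPNat']
      have hne : (m+1 : ℕ).toPNat' ≠ (m+1 : ℕ).toPNat' + 1 := by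
        intro h; have := congrArg (PNat.val) h; simp at this
      rw [show lnp (evolMul sqD) fwit (m+2)
        = evolMul sqD (lnp (evolMul sqD) fwit (m+1)) (fwit (m+2)) from rfl, ih,
        fwit, h2, mul_key _ _ hne]
      · rfl
      · have hne' : (m+1 : ℕ).toPNat' + 1 ≠ (m+1 : ℕ).toPNat' := fun h => hne h.symm
        simp [Finsupp.single_apply, hne']
      · simp

/-- Example 3.4, part 2: The evolution algebra over the dual
numbers `R = ℝ[t]/(t²)` with `x_i·x_i = ε•x_i + x_{i+1}` is not nilpotent: the
plenary powers of `x_1` satisfy `x_1^{[n]} = ε•x_n + x_{n+1} ≠ 0` for all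
`n ≥ 1`, for every `n ≥ 2` some left-normed product of `n` elements is
nonzero, and hence there is no `n ≥ 2` making all left-normed products of `n`
elements vanish. -/
theorem example_dual_numbers_not_nilpotent :
    (∀ n : ℕ+, plenary (evolMul sqD) (Finsupp.single 1 1) (n : ℕ)
        = (DualNumber.eps : DualNumber ℝ) • Finsupp.single n (1 : DualNumber ℝ)
            + Finsupp.single (n + 1) 1) ∧
    (∀ n : ℕ+, plenary (evolMul sqD) (Finsupp.single 1 1) (n : ℕ) ≠ 0) ∧
    (∀ n : ℕ, 2 ≤ n →
        ∃ f : ℕ → (ℕ+ →₀ DualNumber ℝ), lnp (evolMul sqD) f (n - 1) ≠ 0) ∧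
    ¬ (∃ n : ℕ, 2 ≤ n ∧
        ∀ f : ℕ → (ℕ+ →₀ DualNumber ℝ), lnp (evolMul sqD) f (n - 1) = 0) := by
  have key : ∀ n : ℕ+, plenary (evolMul sqD) (Finsupp.single 1 1) (n : ℕ)
      = (DualNumber.eps : DualNumber ℝ) • Finsupp.single n (1 : DualNumber ℝ)
          + Finsupp.single (n + 1) 1 := by
    intro n
    obtain ⟨m, hm⟩ : ∃ m, (n : ℕ) = m + 1 := ⟨(n:ℕ)-1, by have := n.pos; omega⟩
    have hp : ((m+1 : ℕ).toPNat' : ℕ+) = n := by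
      rw [← hm]; exact PNat.coe_toPNat' n
    rw [hm, plen, hp]
  have hne1 : ∀ i : ℕ+, i ≠ i + 1 := fun i h => by
    have := congrArg (PNat.val) h; simp at this
  refine ⟨key, fun n => key n ▸ nz n (n+1) (hne1 n), ?_, ?_⟩
  · intro n hn
    refine ⟨fwit, ?_⟩
    obtain ⟨m, hm⟩ : ∃ m, n - 1 = m + 1 := ⟨n - 2, by omega⟩
    rw [hm, lnp_key]
    exact nz _ _ (hne1 _)
  · rintro ⟨n, hn, hall⟩
    obtain ⟨m, hm⟩ : ∃ m, n - 1 = m + 1 := ⟨n - 2, by omega⟩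
    have := hall fwit
    rw [hm, lnp_key] at this
    exact nz _ _ (hne1 _) this
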